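/- Let N ≥ 4 be an integer and c > 0. Define the (N+1)×(N+1) real symmetric matrix E(t,c) by: E₁₁ = 2c; E_{1,N+1} = E_{N+1,1} = t − c; E_{1,j} = 0 for 2 ≤ j ≤ N; diagonal entries E_{k,k} = α_k where α₂ = 6c − 5t, α_k = 2(2k² − 3k + 1)c − (4k − 1)t for 3 ≤ k ≤ N−1, α_N = 2N(N−1)c − (2N+1)t, α_{N+1} = 2Nc − (N+1)t; tridiagonal entries E_{k,k+1} = E_{k+1,k} = β_k where β_k = 2kt − (2k² − k − 1)c for 2 ≤ k ≤ N−1 and β_N = 3t − 2(N−1)c; last-column entries E_{2,N+1} = E_{N+1,2} = −t and E_{k,N+1} = E_{N+1,k} = t for 3 ≤ k ≤ N−1; all other entries zero. Then for every t ∈ [0, c], the matrix E(t,c) is positive semidefinite. -/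

import Mathlib

open Matrix

/-- Diagonal entries α_k (1-based index `k`) of the matrix E(t,c). -/
noncomputable def Ealpha (N : ℕ) (t c : ℝ) (k : ℕ) : ℝ :=
  if k = 2 then 6 * c - 5 * t
  else if k ≤ N - 1 then 2 * (2 * (k : ℝ) ^ 2 - 3 * (k : ℝ) + 1) * c - (4 * (k : ℝ) - 1) * t
  else if k = N then 2 * (N : ℝ) * ((N : ℝ) - 1) * c - (2 * (N : ℝ) + 1) * t
  else 2 * (N : ℝ) * c - ((N : ℝ) + 1) * t

/-- Off-diagonal entries β_k (1-based index `k`) of the matrix E(t,c). -/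
noncomputable def Ebeta (N : ℕ) (t c : ℝ) (k : ℕ) : ℝ :=
  if k ≤ N - 1 then 2 * (k : ℝ) * t - (2 * (k : ℝ) ^ 2 - (k : ℝ) - 1) * c
  else 3 * t - 2 * ((N : ℝ) - 1) * c

/-- Upper-triangular entry of E(t,c) at 1-based position (a,b) with a ≤ b. -/
noncomputable def Eentry (N : ℕ) (t c : ℝ) (a b : ℕ) : ℝ :=
  if a = 1 then (if b = 1 then 2 * c else if b = N + 1 then t - c else 0)
  else if a = b then Ealpha N t c a
  else if b = a + 1 then Ebeta N t c a
  else if b = N + 1 then (if a = 2 then -t else if a ≤ N - 1 then t else 0)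
  else 0

/-- The (N+1)×(N+1) symmetric matrix E(t,c) of Lemma 1. -/
noncomputable def Emat (N : ℕ) (t c : ℝ) : Matrix (Fin (N + 1)) (Fin (N + 1)) ℝ :=
  fun i j =>
    if (i : ℕ) ≤ (j : ℕ) then Eentry N t c ((i : ℕ) + 1) ((j : ℕ) + 1)
    else Eentry N t c ((j : ℕ) + 1) ((i : ℕ) + 1)

section Aux
variable (N : ℕ) (c : ℝ)

/-- diagonal of arrow matrix Z (0-based) -/
noncomputable def dval (a : ℕ) : ℝ :=
  if a = 0 then 2*c else if a = N then (2*(N:ℝ)-4)*c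
  else if a ≤ N-2 then (2*(a:ℝ)^2+(a:ℝ)-2)*c else (3*(N:ℝ)-5)*c

/-- arrow entries of Z -/
noncomputable def wv (a : ℕ) : ℝ :=
  if a = 0 ∨ a = N then 0 else if a ≤ N-2 then ((a:ℝ)-2)*c else (2*(N:ℝ)-4)*c

/-- budget split -/
noncomputable def aval (a : ℕ) : ℝ :=
  if a = 0 ∨ a = N then 0 else if a = 1 then c else if a ≤ N-2 then c/2 else ((3*(N:ℝ)-7)/2)*c

noncomputable def Zn (a b : ℕ) : ℝ :=
  (if a = b then dval N c a else 0) + (if b = N then wv N c a else 0)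
  + (if a = N then wv N c b else 0)

noncomputable def Fn (i j : ℕ) : ℝ :=
  Zn N c i j - (if 2 ≤ j then Zn N c i (j-1) else 0)
  - (if 2 ≤ i then Zn N c (i-1) j else 0)
  + (if 2 ≤ i ∧ 2 ≤ j then Zn N c (i-1) (j-1) else 0)

noncomputable def Zmat : Matrix (Fin (N+1)) (Fin (N+1)) ℝ := fun a b => Zn N c (a:ℕ) (b:ℕ)

noncomputable def Dmat : Matrix (Fin (N+1)) (Fin (N+1)) ℝ := fun b j =>
  (if b = j then 1 else 0) + (if (b:ℕ)+1 = (j:ℕ) ∧ 1 ≤ (b:ℕ) then -1 else 0)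

lemma collapse (f : Fin (N+1) → ℝ) (j : Fin (N+1)) :
    ∑ b : Fin (N+1), f b * Dmat N b j
      = f j - (if 2 ≤ (j:ℕ) then f ⟨(j:ℕ)-1, by omega⟩ else 0) := by
  have h1 : ∑ b : Fin (N+1), f b * (if b = j then (1:ℝ) else 0) = f j := by
    simp [mul_ite]
  have h2 : ∑ b : Fin (N+1), f b * (if (b:ℕ)+1 = (j:ℕ) ∧ 1 ≤ (b:ℕ) then (-1:ℝ) else 0)
      = -(if 2 ≤ (j:ℕ) then f ⟨(j:ℕ)-1, by omega⟩ else 0) := by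
    by_cases hj : 2 ≤ (j:ℕ)
    · rw [if_pos hj]
      rw [Finset.sum_eq_single (⟨(j:ℕ)-1, by omega⟩ : Fin (N+1))]
      · rw [if_pos (by constructor <;> simp <;> omega)]; ring
      · intro b _ hb
        rw [if_neg, mul_zero]
        rintro ⟨h1', h2'⟩
        exact hb (by apply Fin.ext; simp; omega)
      · intro h; exact absurd (Finset.mem_univ _) h
    · rw [if_neg hj, neg_zero]
      apply Finset.sum_eq_zero
      intro b _
      rw [if_neg (by omega), mul_zero]
  calc ∑ b : Fin (N+1), f b * Dmat N b j
      = ∑ b : Fin (N+1), (f b * (if b = j then (1:ℝ) else 0)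
        + f b * (if (b:ℕ)+1 = (j:ℕ) ∧ 1 ≤ (b:ℕ) then (-1:ℝ) else 0)) := by
        apply Finset.sum_congr rfl; intro b _; simp only [Dmat]; ring
    _ = _ := by rw [Finset.sum_add_distrib, h1, h2]; ring

end Aux

section Aux2
variable (N : ℕ) (c : ℝ)

lemma Zn_symm (a b : ℕ) : Zn N c a b = Zn N c b a := by
  unfold Zn
  by_cases h : a = b
  · subst h; ring
  · rw [if_neg h, if_neg (Ne.symm h)]; ring

lemma DZD (i j : Fin (N+1)) :
    ((Dmat N)ᵀ * Zmat N c * Dmat N) i j = Fn N c (i:ℕ) (j:ℕ) := by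
  rw [Matrix.mul_assoc]
  have hZD : ∀ a : Fin (N+1), (Zmat N c * Dmat N) a j
      = Zn N c (a:ℕ) (j:ℕ) - (if 2 ≤ (j:ℕ) then Zn N c (a:ℕ) ((j:ℕ)-1) else 0) := by
    intro a
    rw [Matrix.mul_apply]
    exact collapse N (fun b => Zn N c (a:ℕ) (b:ℕ)) j
  rw [Matrix.mul_apply]
  have : ∀ a : Fin (N+1), (Dmat N)ᵀ i a * (Zmat N c * Dmat N) a j
      = (fun a : Fin (N+1) => (Zmat N c * Dmat N) a j) a * Dmat N a i := by
    intro a; rw [Matrix.transpose_apply]; ring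
  rw [Finset.sum_congr rfl (fun a _ => this a), collapse N _ i]
  rw [hZD]
  have hpred : (2 ≤ (i:ℕ)) → (Zmat N c * Dmat N) (⟨(i:ℕ)-1, by omega⟩ : Fin (N+1)) j
      = Zn N c ((i:ℕ)-1) (j:ℕ) - (if 2 ≤ (j:ℕ) then Zn N c ((i:ℕ)-1) ((j:ℕ)-1) else 0) := by
    intro _; rw [hZD]
  unfold Fn
  by_cases hi : 2 ≤ (i:ℕ)
  · rw [if_pos hi, if_pos hi, hpred hi]
    by_cases hj : 2 ≤ (j:ℕ)
    · rw [if_pos hj, if_pos hj, if_pos ⟨hi, hj⟩]; ring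
    · rw [if_neg hj, if_neg hj, if_neg (by tauto)]; ring
  · rw [if_neg hi, if_neg hi, if_neg (show ¬(2 ≤ (i:ℕ) ∧ 2 ≤ (j:ℕ)) from fun h => hi h.1)]; ring

lemma Fn_symm (i j : ℕ) : Fn N c i j = Fn N c j i := by
  unfold Fn
  rw [Zn_symm N c i j, Zn_symm N c i (j-1), Zn_symm N c (i-1) j, Zn_symm N c (i-1) (j-1)]
  by_cases hi : 2 ≤ i <;> by_cases hj : 2 ≤ j <;>
    simp only [hi, hj, and_true, and_false, true_and, false_and, if_true, if_false,
      if_pos, if_neg, not_false_iff] <;> ring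

end Aux2
section Aux3
variable (N : ℕ) (t c : ℝ)

lemma cast_pred (i : ℕ) (h : 1 ≤ i) : ((i-1 : ℕ):ℝ) = (i:ℝ) - 1 := by
  rw [Nat.cast_sub h]; norm_num

-- dval evals
lemma dval_0 : dval N c 0 = 2*c := by unfold dval; rw [if_pos rfl]
lemma dval_mid (a : ℕ) (h1 : a ≠ 0) (h2 : a ≤ N-2) (hN : 4 ≤ N) :
    dval N c a = (2*(a:ℝ)^2+(a:ℝ)-2)*c := by
  unfold dval; rw [if_neg h1, if_neg (by omega), if_pos h2]
lemma dval_pen (hN : 4 ≤ N) : dval N c (N-1) = (3*(N:ℝ)-5)*c := by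
  unfold dval; rw [if_neg (by omega), if_neg (by omega), if_neg (by omega)]
lemma dval_N (hN : 4 ≤ N) : dval N c N = (2*(N:ℝ)-4)*c := by
  unfold dval; rw [if_neg (by omega), if_pos rfl]

-- wv evals
lemma wv_mid (a : ℕ) (h1 : a ≠ 0) (h2 : a ≤ N-2) (hN : 4 ≤ N) :
    wv N c a = ((a:ℝ)-2)*c := by
  unfold wv; rw [if_neg (by omega), if_pos h2]
lemma wv_pen (hN : 4 ≤ N) : wv N c (N-1) = (2*(N:ℝ)-4)*c := by
  unfold wv; rw [if_neg (by omega), if_neg (by omega)]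
lemma wv_N : wv N c N = 0 := by unfold wv; rw [if_pos (Or.inr rfl)]
lemma wv_0 : wv N c 0 = 0 := by unfold wv; rw [if_pos (Or.inl rfl)]

-- Zn evals
lemma Zn_zero (a b : ℕ) (hab : a ≠ b) (haN : a ≠ N) (hbN : b ≠ N) : Zn N c a b = 0 := by
  unfold Zn; rw [if_neg hab, if_neg hbN, if_neg haN]; ring
lemma Zn_diag (a : ℕ) (haN : a ≠ N) : Zn N c a a = dval N c a := by
  unfold Zn; rw [if_pos rfl, if_neg haN]; ring
lemma Zn_NN : Zn N c N N = dval N c N := by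
  unfold Zn wv; simp
lemma Zn_colN (a : ℕ) (haN : a ≠ N) : Zn N c a N = wv N c a := by
  unfold Zn; rw [if_neg haN, if_pos rfl, if_neg haN]; ring
lemma Zn_rowN (b : ℕ) (hbN : b ≠ N) : Zn N c N b = wv N c b := by
  unfold Zn; rw [if_neg (Ne.symm hbN), if_neg hbN, if_pos rfl]; ring

-- Eentry evals
lemma ee_11 (hN : 4 ≤ N) : Eentry N t c 1 1 = 2*c := by
  unfold Eentry; split_ifs <;> first | rfl | (exfalso; omega)
lemma ee_1b (hN : 4 ≤ N) (b : ℕ) (h1 : 2 ≤ b) (h2 : b ≤ N) : Eentry N t c 1 b = 0 := by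
  unfold Eentry; split_ifs <;> first | rfl | (exfalso; omega)
lemma ee_1last (hN : 4 ≤ N) : Eentry N t c 1 (N+1) = t - c := by
  unfold Eentry; split_ifs <;> first | rfl | (exfalso; omega)
lemma ee_diag (hN : 4 ≤ N) (a : ℕ) (h : 2 ≤ a) : Eentry N t c a a = Ealpha N t c a := by
  unfold Eentry; split_ifs <;> first | rfl | (exfalso; omega)
lemma ee_super (hN : 4 ≤ N) (a : ℕ) (h : 2 ≤ a) : Eentry N t c a (a+1) = Ebeta N t c a := by
  unfold Eentry; split_ifs <;> first | rfl | (exfalso; omega)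
lemma ee_last (a : ℕ) (h3 : 3 ≤ a) (h2 : a ≤ N-1) (hN : 4 ≤ N) :
    Eentry N t c a (N+1) = t := by
  unfold Eentry; split_ifs <;> first | rfl | (exfalso; omega)
lemma ee_2last (hN : 4 ≤ N) : Eentry N t c 2 (N+1) = -t := by
  unfold Eentry; split_ifs <;> first | rfl | (exfalso; omega)
lemma ee_far (hN : 4 ≤ N) (a b : ℕ) (h1 : 2 ≤ a) (h2 : a+2 ≤ b) (h3 : b ≤ N) :
    Eentry N t c a b = 0 := by
  unfold Eentry; split_ifs <;> first | rfl | (exfalso; omega)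

-- Ealpha / Ebeta evals
lemma al_2 : Ealpha N t c 2 = 6*c - 5*t := by unfold Ealpha; rw [if_pos rfl]
lemma al_mid (hN : 4 ≤ N) (a : ℕ) (h1 : a ≠ 2) (h2 : a ≤ N-1) :
    Ealpha N t c a = 2*(2*(a:ℝ)^2 - 3*(a:ℝ) + 1)*c - (4*(a:ℝ)-1)*t := by
  unfold Ealpha; split_ifs <;> first | rfl | (exfalso; omega)
lemma al_N (hN : 4 ≤ N) : Ealpha N t c N = 2*(N:ℝ)*((N:ℝ)-1)*c - (2*(N:ℝ)+1)*t := by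
  unfold Ealpha; split_ifs <;> first | rfl | (exfalso; omega)
lemma al_last (hN : 4 ≤ N) : Ealpha N t c (N+1) = 2*(N:ℝ)*c - ((N:ℝ)+1)*t := by
  unfold Ealpha; split_ifs <;> first | rfl | (exfalso; omega)
lemma be_mid (a : ℕ) (h : a ≤ N-1) :
    Ebeta N t c a = 2*(a:ℝ)*t - (2*(a:ℝ)^2 - (a:ℝ) - 1)*c := by
  unfold Ebeta; rw [if_pos h]
lemma be_N (a : ℕ) (h : ¬ (a ≤ N-1)) : Ebeta N t c a = 3*t - 2*((N:ℝ)-1)*c := by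
  unfold Ebeta; rw [if_neg h]

end Aux3
section Main1
variable (N : ℕ) (c : ℝ)

lemma main1 (hN : 4 ≤ N) {i j : ℕ} (hij : i ≤ j) (hj : j ≤ N) :
    Eentry N c c (i+1) (j+1) = Fn N c i j := by
  unfold Fn
  by_cases hi0 : i = 0
  · subst hi0
    rw [if_neg (show ¬(2 ≤ 0) by omega),
      if_neg (show ¬(2 ≤ 0 ∧ 2 ≤ j) from fun h => by omega)]
    by_cases hj0 : j = 0
    · subst hj0
      rw [if_neg (show ¬((2:ℕ) ≤ 0) by omega), Zn_diag N c 0 (by omega), dval_0,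
        ee_11 N c c hN]
      ring
    · by_cases hjN : j = N
      · rw [hjN]
        rw [if_pos (show 2 ≤ N by omega), Zn_colN N c 0 (by omega), wv_0,
          Zn_zero N c 0 (N-1) (by omega) (by omega) (by omega), ee_1last N c c hN]
        ring
      · rw [ee_1b N c c hN (j+1) (by omega) (by omega),
          Zn_zero N c 0 j (by omega) (by omega) (by omega)]
        by_cases hj1 : j = 1
        · subst hj1; rw [if_neg (show ¬((2:ℕ) ≤ 1) by omega)]; ring
        · rw [if_pos (show 2 ≤ j by omega),
            Zn_zero N c 0 (j-1) (by omega) (by omega) (by omega)]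
          ring
  · by_cases hi1 : i = 1
    · subst hi1
      rw [if_neg (show ¬((2:ℕ) ≤ 1) by omega),
        if_neg (show ¬((2:ℕ) ≤ 1 ∧ 2 ≤ j) from fun h => by omega)]
      by_cases hj1 : j = 1
      · subst hj1
        rw [if_neg (show ¬((2:ℕ) ≤ 1) by omega), Zn_diag N c 1 (by omega),
          dval_mid N c 1 (by omega) (by omega) hN, ee_diag N c c hN 2 (by omega), al_2]
        push_cast; ring
      · by_cases hj2 : j = 2
        · subst hj2
          rw [if_pos (show (2:ℕ) ≤ 2 by omega),
            Zn_zero N c 1 2 (by omega) (by omega) (by omega),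
            show (2-1 : ℕ) = 1 from rfl, Zn_diag N c 1 (by omega),
            dval_mid N c 1 (by omega) (by omega) hN,
            ee_super N c c hN 2 (by omega), be_mid N c c 2 (by omega)]
          push_cast; ring
        · by_cases hjN : j = N
          · rw [hjN]
            rw [if_pos (show 2 ≤ N by omega), Zn_colN N c 1 (by omega),
              wv_mid N c 1 (by omega) (by omega) hN,
              Zn_zero N c 1 (N-1) (by omega) (by omega) (by omega), ee_2last N c c hN]
            push_cast; ring
          · rw [if_pos (show 2 ≤ j by omega),
              Zn_zero N c 1 j (by omega) (by omega) (by omega),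
              Zn_zero N c 1 (j-1) (by omega) (by omega) (by omega),
              ee_far N c c hN 2 (j+1) (by omega) (by omega) (by omega)]
            ring
    · by_cases hiN : i = N
      · have hjN : j = N := by omega
        rw [hjN] at *; rw [hiN] at *
        rw [if_pos (show 2 ≤ N by omega), if_pos (show 2 ≤ N by omega),
          if_pos (show 2 ≤ N ∧ 2 ≤ N from ⟨by omega, by omega⟩), Zn_NN, dval_N N c hN,
          Zn_rowN N c (N-1) (by omega), Zn_colN N c (N-1) (by omega),
          Zn_diag N c (N-1) (by omega), wv_pen N c hN, dval_pen N c hN,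
          ee_diag N c c hN (N+1) (by omega), al_last N c c hN]
        push_cast; ring
      · by_cases hiN1 : i = N-1
        · subst hiN1
          have e1 : (N-1-1 : ℕ) = N-2 := by omega
          by_cases hjN : j = N
          · rw [hjN]
            rw [show N-1+1 = N from by omega,
              if_pos (show 2 ≤ N by omega), if_pos (show 2 ≤ N-1 by omega),
              if_pos (show 2 ≤ N-1 ∧ 2 ≤ N from ⟨by omega, by omega⟩), e1,
              Zn_colN N c (N-1) (by omega), wv_pen N c hN,
              Zn_diag N c (N-1) (by omega), dval_pen N c hN,
              Zn_colN N c (N-2) (by omega), wv_mid N c (N-2) (by omega) (by omega) hN,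
              Zn_zero N c (N-2) (N-1) (by omega) (by omega) (by omega),
              ee_super N c c hN N (by omega), be_N N c c N (by omega)]
            push_cast [Nat.cast_sub (show 2 ≤ N by omega)]
            ring
          · have hjj : j = N-1 := by omega
            rw [hjj]
            rw [show N-1+1 = N from by omega,
              if_pos (show 2 ≤ N-1 by omega), if_pos (show 2 ≤ N-1 by omega),
              if_pos (show 2 ≤ N-1 ∧ 2 ≤ N-1 from ⟨by omega, by omega⟩), e1,
              Zn_diag N c (N-1) (by omega), dval_pen N c hN,
              Zn_zero N c (N-1) (N-2) (by omega) (by omega) (by omega),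
              Zn_zero N c (N-2) (N-1) (by omega) (by omega) (by omega),
              Zn_diag N c (N-2) (by omega), dval_mid N c (N-2) (by omega) (by omega) hN,
              ee_diag N c c hN N (by omega), al_N N c c hN]
            push_cast [Nat.cast_sub (show 2 ≤ N by omega)]
            ring
        · have hi2 : 2 ≤ i := by omega
          have hiN2 : i ≤ N-2 := by omega
          by_cases hje : j = i
          · rw [hje]
            rw [if_pos hi2, if_pos hi2, if_pos (show 2 ≤ i ∧ 2 ≤ i from ⟨hi2, hi2⟩),
              Zn_diag N c i (by omega), dval_mid N c i (by omega) hiN2 hN,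
              Zn_zero N c i (i-1) (by omega) (by omega) (by omega),
              Zn_zero N c (i-1) i (by omega) (by omega) (by omega),
              Zn_diag N c (i-1) (by omega), dval_mid N c (i-1) (by omega) (by omega) hN,
              ee_diag N c c hN (i+1) (by omega),
              al_mid N c c hN (i+1) (by omega) (by omega), cast_pred i (by omega)]
            push_cast; ring
          · by_cases hje1 : j = i+1
            · subst hje1
              rw [if_pos (show 2 ≤ i+1 by omega), if_pos hi2,
                if_pos (show 2 ≤ i ∧ 2 ≤ i+1 from ⟨hi2, by omega⟩),
                show (i+1-1 : ℕ) = i from rfl,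
                Zn_zero N c i (i+1) (by omega) (by omega) (by omega),
                Zn_diag N c i (by omega), dval_mid N c i (by omega) hiN2 hN,
                Zn_zero N c (i-1) (i+1) (by omega) (by omega) (by omega),
                Zn_zero N c (i-1) i (by omega) (by omega) (by omega),
                ee_super N c c hN (i+1) (by omega), be_mid N c c (i+1) (by omega)]
              push_cast; ring
            · by_cases hjN : j = N
              · rw [hjN]
                rw [if_pos (show 2 ≤ N by omega), if_pos hi2,
                  if_pos (show 2 ≤ i ∧ 2 ≤ N from ⟨hi2, by omega⟩),
                  Zn_colN N c i (by omega), wv_mid N c i (by omega) hiN2 hN,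
                  Zn_zero N c i (N-1) (by omega) (by omega) (by omega),
                  Zn_colN N c (i-1) (by omega), wv_mid N c (i-1) (by omega) (by omega) hN,
                  Zn_zero N c (i-1) (N-1) (by omega) (by omega) (by omega),
                  ee_last N c c (i+1) (by omega) (by omega) hN, cast_pred i (by omega)]
                push_cast; ring
              · rw [if_pos (show 2 ≤ j by omega), if_pos hi2,
                  if_pos (show 2 ≤ i ∧ 2 ≤ j from ⟨hi2, by omega⟩),
                  Zn_zero N c i j (by omega) (by omega) (by omega),
                  Zn_zero N c i (j-1) (by omega) (by omega) (by omega),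
                  Zn_zero N c (i-1) j (by omega) (by omega) (by omega),
                  Zn_zero N c (i-1) (j-1) (by omega) (by omega) (by omega),
                  ee_far N c c hN (i+1) (j+1) (by omega) (by omega) (by omega)]
                ring
end Main1
section Zpsd
variable (N : ℕ) (c : ℝ)

lemma aval_0 : aval N c 0 = 0 := by unfold aval; rw [if_pos (Or.inl rfl)]
lemma aval_N : aval N c N = 0 := by unfold aval; rw [if_pos (Or.inr rfl)]
lemma aval_1 (hN : 4 ≤ N) : aval N c 1 = c := by
  unfold aval; rw [if_neg (by omega), if_pos rfl]
lemma aval_mid (a : ℕ) (h1 : 2 ≤ a) (h2 : a ≤ N-2) (hN : 4 ≤ N) : aval N c a = c/2 := by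
  unfold aval; rw [if_neg (by omega), if_neg (by omega), if_pos h2]
lemma aval_pen (hN : 4 ≤ N) : aval N c (N-1) = ((3*(N:ℝ)-7)/2)*c := by
  unfold aval; rw [if_neg (by omega), if_neg (by omega), if_neg (by omega)]

lemma aval_sum (hN : 4 ≤ N) : ∑ a : Fin (N+1), aval N c (a:ℕ) = (2*(N:ℝ)-4)*c := by
  rw [Fin.sum_univ_eq_sum_range (fun k => aval N c k) (N+1)]
  have hset : Finset.range (N+1)
      = insert 0 (insert 1 (insert (N-1) (insert N (Finset.Icc 2 (N-2))))) := by
    ext a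
    simp only [Finset.mem_insert, Finset.mem_range, Finset.mem_Icc]
    omega
  rw [hset, Finset.sum_insert (by simp only [Finset.mem_insert, Finset.mem_Icc]; omega),
    Finset.sum_insert (by simp only [Finset.mem_insert, Finset.mem_Icc]; omega),
    Finset.sum_insert (by simp only [Finset.mem_insert, Finset.mem_Icc]; omega),
    Finset.sum_insert (by simp only [Finset.mem_Icc]; omega)]
  rw [aval_0, aval_1 N c hN, aval_pen N c hN, aval_N]
  have hmid : ∑ a ∈ Finset.Icc 2 (N-2), aval N c a = ((N:ℝ)-3)*(c/2) := by
    calc ∑ a ∈ Finset.Icc 2 (N-2), aval N c a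
        = ∑ _a ∈ Finset.Icc 2 (N-2), c/2 :=
          Finset.sum_congr rfl (fun a ha => by
            rw [Finset.mem_Icc] at ha; exact aval_mid N c a ha.1 ha.2 hN)
      _ = (N-2+1-2 : ℕ) • (c/2) := by rw [Finset.sum_const, Nat.card_Icc]
      _ = ((N:ℝ)-3)*(c/2) := by
          rw [nsmul_eq_mul, show (N-2+1-2 : ℕ) = N - 3 from by omega,
            Nat.cast_sub (by omega : 3 ≤ N)]
          norm_num
  rw [hmid]
  ring

lemma Zquad (hN : 4 ≤ N) (hc : 0 < c) (y : Fin (N+1) → ℝ) :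
    0 ≤ y ⬝ᵥ (Zmat N c *ᵥ y) := by
  set L : Fin (N+1) := ⟨N, by omega⟩ with hL
  have inner_eq : ∀ a : Fin (N+1), (Zmat N c *ᵥ y) a
      = dval N c (a:ℕ) * y a + wv N c (a:ℕ) * y L
        + (if (a:ℕ) = N then ∑ b : Fin (N+1), wv N c (b:ℕ) * y b else 0) := by
    intro a
    show (∑ b : Fin (N+1), Zn N c (a:ℕ) (b:ℕ) * y b) = _
    have e1 : ∀ b : Fin (N+1), Zn N c (a:ℕ) (b:ℕ) * y b
        = (if (a:ℕ) = (b:ℕ) then dval N c (a:ℕ) * y b else 0)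
          + (if (b:ℕ) = N then wv N c (a:ℕ) * y b else 0)
          + (if (a:ℕ) = N then wv N c (b:ℕ) * y b else 0) := by
      intro b
      simp only [Zn, add_mul, ite_mul, zero_mul]
    rw [Finset.sum_congr rfl (fun b _ => e1 b), Finset.sum_add_distrib,
      Finset.sum_add_distrib]
    congr 1
    · congr 1
      · rw [Finset.sum_eq_single a]
        · rw [if_pos rfl]
        · intro b _ hb
          rw [if_neg (fun h => hb (Fin.ext h.symm))]
        · intro h; exact absurd (Finset.mem_univ _) h
      · rw [Finset.sum_eq_single L]
        · rw [if_pos rfl]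
        · intro b _ hb
          rw [if_neg (fun h => hb (Fin.ext (by simpa using h)))]
        · intro h; exact absurd (Finset.mem_univ _) h
    · by_cases h3 : (a:ℕ) = N
      · rw [if_pos h3]
        exact Finset.sum_congr rfl (fun b _ => by rw [if_pos h3])
      · rw [if_neg h3]
        exact Finset.sum_eq_zero (fun b _ => by rw [if_neg h3])
  have qf : y ⬝ᵥ (Zmat N c *ᵥ y)
      = ∑ a : Fin (N+1), (dval N c (a:ℕ) * y a ^ 2 + 2 * wv N c (a:ℕ) * y a * y L) := by
    unfold dotProduct
    rw [Finset.sum_congr rfl (fun a _ => by rw [inner_eq a])]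
    have split : ∀ a : Fin (N+1), y a * (dval N c (a:ℕ) * y a + wv N c (a:ℕ) * y L
        + (if (a:ℕ) = N then ∑ b : Fin (N+1), wv N c (b:ℕ) * y b else 0))
        = (dval N c (a:ℕ) * y a ^ 2 + wv N c (a:ℕ) * y a * y L)
          + (if (a:ℕ) = N then y L * (∑ b : Fin (N+1), wv N c (b:ℕ) * y b) else 0) := by
      intro a
      by_cases h3 : (a:ℕ) = N
      · have : a = L := Fin.ext h3
        rw [if_pos h3, if_pos h3, this]; ring
      · rw [if_neg h3, if_neg h3]; ring
    rw [Finset.sum_congr rfl (fun a _ => split a), Finset.sum_add_distrib]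
    have e2 : (∑ a : Fin (N+1), (if (a:ℕ) = N then
        y L * (∑ b : Fin (N+1), wv N c (b:ℕ) * y b) else 0))
        = ∑ b : Fin (N+1), wv N c (b:ℕ) * y b * y L := by
      rw [Finset.sum_eq_single L]
      · rw [if_pos rfl, Finset.mul_sum]
        exact Finset.sum_congr rfl (fun b _ => by ring)
      · intro b _ hb
        rw [if_neg (fun h => hb (Fin.ext (by simpa using h)))]
      · intro h; exact absurd (Finset.mem_univ _) h
    rw [e2, ← Finset.sum_add_distrib]
    exact Finset.sum_congr rfl (fun a _ => by ring)
  rw [qf]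
  have e3 : (∑ a : Fin (N+1), aval N c (a:ℕ) * y L ^ 2)
      = ∑ a : Fin (N+1), (if (a:ℕ) = N then (2*(N:ℝ)-4)*c * y L ^ 2 else 0) := by
    rw [← Finset.sum_mul, aval_sum N c hN, Finset.sum_eq_single L]
    · rw [if_pos rfl]
    · intro b _ hb
      rw [if_neg (fun h => hb (Fin.ext (by simpa using h)))]
    · intro h; exact absurd (Finset.mem_univ _) h
  have sum_eq : ∑ a : Fin (N+1), (dval N c (a:ℕ) * y a ^ 2 + 2 * wv N c (a:ℕ) * y a * y L
        + aval N c (a:ℕ) * y L ^ 2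
        - (if (a:ℕ) = N then (2*(N:ℝ)-4)*c * y L ^ 2 else 0))
      = ∑ a : Fin (N+1), (dval N c (a:ℕ) * y a ^ 2 + 2 * wv N c (a:ℕ) * y a * y L) := by
    rw [Finset.sum_sub_distrib, Finset.sum_add_distrib, ← e3]
    ring
  rw [← sum_eq]
  apply Finset.sum_nonneg
  intro a _
  clear sum_eq e3 qf inner_eq
  have haN : (a:ℕ) ≤ N := by omega
  by_cases h0 : (a:ℕ) = 0
  · rw [h0, dval_0, wv_0, aval_0, if_neg (by omega)]
    nlinarith [mul_nonneg hc.le (sq_nonneg (y a))]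
  · by_cases hNN : (a:ℕ) = N
    · have : a = L := Fin.ext hNN
      rw [hNN, dval_N N c hN, wv_N, aval_N, if_pos rfl, this]
      nlinarith [sq_nonneg (y L)]
    · rw [if_neg hNN]
      by_cases h1 : (a:ℕ) = 1
      · rw [h1, dval_mid N c 1 (by omega) (by omega) hN, wv_mid N c 1 (by omega) (by omega) hN,
          aval_1 N c hN]
        push_cast
        nlinarith [mul_nonneg hc.le (sq_nonneg (y a - y L))]
      · by_cases hpen : (a:ℕ) = N-1
        · rw [hpen, dval_pen N c hN, wv_pen N c hN, aval_pen N c hN]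
          have hB4 : (4:ℝ) ≤ (N:ℝ) := by exact_mod_cast hN
          set B := (N:ℝ) with hB
          set Y := y a
          set Z := y L
          have key : (3*B-5) * ((3*B-5)*c * Y^2 + 2*((2*B-4)*c) * Y * Z + ((3*B-7)/2)*c * Z^2)
              = c * ((3*B-5)*Y + (2*B-4)*Z)^2 + c * ((B-1)*(B-3)/2) * Z^2 := by ring
          have h1' : 0 ≤ c * ((3*B-5)*Y + (2*B-4)*Z)^2 := by positivity
          have h2' : 0 ≤ c * ((B-1)*(B-3)/2) * Z^2 := by
            apply mul_nonneg (mul_nonneg hc.le (by nlinarith)) (sq_nonneg Z)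
          have h3' : 0 < 3*B-5 := by nlinarith
          rw [sub_zero]
          refine le_of_mul_le_mul_left ?_ h3'
          rw [mul_zero, key]
          linarith [h1', h2']
        · -- 2 ≤ a ≤ N-2
          have ha2 : 2 ≤ (a:ℕ) := by omega
          have haN2 : (a:ℕ) ≤ N-2 := by omega
          rw [dval_mid N c (a:ℕ) (by omega) haN2 hN, wv_mid N c (a:ℕ) (by omega) haN2 hN,
            aval_mid N c (a:ℕ) ha2 haN2 hN]
          have hA2 : (2:ℝ) ≤ ((a:ℕ):ℝ) := by exact_mod_cast ha2
          set A := ((a:ℕ):ℝ) with hA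
          set Y := y a
          set Z := y L
          have key : (2*A^2+A-2) * ((2*A^2+A-2)*c * Y^2 + 2*((A-2)*c) * Y * Z + c/2 * Z^2)
              = c * ((2*A^2+A-2)*Y + (A-2)*Z)^2 + c * ((9*A-10)/2) * Z^2 := by ring
          have h1' : 0 ≤ c * ((2*A^2+A-2)*Y + (A-2)*Z)^2 := by positivity
          have h2' : 0 ≤ c * ((9*A-10)/2) * Z^2 := by
            apply mul_nonneg (mul_nonneg hc.le (by nlinarith)) (sq_nonneg Z)
          have h3' : 0 < 2*A^2+A-2 := by nlinarith
          rw [sub_zero]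
          refine le_of_mul_le_mul_left ?_ h3'
          rw [mul_zero, key]
          linarith [h1', h2']

end Zpsd
section Lap

lemma lap_nonneg {n : ℕ} (M : Matrix (Fin n) (Fin n) ℝ) (hsym : ∀ i j, M i j = M j i)
    (hoff : ∀ i j, i ≠ j → M i j ≤ 0) (hrow : ∀ i, 0 ≤ ∑ j, M i j) (x : Fin n → ℝ) :
    0 ≤ x ⬝ᵥ (M *ᵥ x) := by
  have expand : x ⬝ᵥ (M *ᵥ x) = ∑ i, ∑ j, M i j * x i * x j := by
    unfold dotProduct mulVec dotProduct
    rw [Finset.sum_congr rfl (fun i _ => Finset.mul_sum _ _ _)]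
    exact Finset.sum_congr rfl (fun i _ => Finset.sum_congr rfl (fun j _ => by ring))
  have h2 : ∑ i, ∑ j, M i j * x j^2 = ∑ i, ∑ j, M i j * x i^2 := by
    rw [Finset.sum_comm]
    exact Finset.sum_congr rfl (fun j _ => Finset.sum_congr rfl (fun i _ => by rw [hsym i j]))
  have split : ∑ i, ∑ j, M i j * x i * x j
      = (∑ i, ∑ j, M i j * x i^2)/2 + (∑ i, ∑ j, M i j * x j^2)/2
        - (∑ i, ∑ j, M i j * (x i - x j)^2)/2 := by
    rw [Finset.sum_div, Finset.sum_div, Finset.sum_div, ← Finset.sum_add_distrib,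
      ← Finset.sum_sub_distrib]
    apply Finset.sum_congr rfl
    intro i _
    rw [Finset.sum_div, Finset.sum_div, Finset.sum_div, ← Finset.sum_add_distrib,
      ← Finset.sum_sub_distrib]
    exact Finset.sum_congr rfl (fun j _ => by ring)
  have hA : 0 ≤ ∑ i, ∑ j, M i j * x i^2 := by
    apply Finset.sum_nonneg
    intro i _
    rw [← Finset.sum_mul]
    exact mul_nonneg (hrow i) (sq_nonneg _)
  have hB : ∑ i, ∑ j, M i j * (x i - x j)^2 ≤ 0 := by
    apply Finset.sum_nonpos
    intro i _
    apply Finset.sum_nonpos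
    intro j _
    by_cases h : i = j
    · subst h; simp
    · exact mul_nonpos_iff.mpr (Or.inr ⟨hoff i j h, sq_nonneg _⟩)
  rw [expand, split, h2]
  linarith

variable (N : ℕ) (c : ℝ)

lemma emat_symm (t : ℝ) (i j : Fin (N+1)) : Emat N t c i j = Emat N t c j i := by
  unfold Emat
  by_cases h1 : (i:ℕ) ≤ (j:ℕ) <;> by_cases h2 : (j:ℕ) ≤ (i:ℕ)
  · have : (i:ℕ) = (j:ℕ) := le_antisymm h1 h2
    rw [if_pos h1, if_pos h2, this]
  · rw [if_pos h1, if_neg h2]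
  · rw [if_neg h1, if_pos h2]
  · omega

lemma hoff0 (hN : 4 ≤ N) (hc : 0 < c) (i j : ℕ) (hij : i < j) (hj : j ≤ N) :
    Eentry N 0 c (i+1) (j+1) ≤ 0 := by
  by_cases hi0 : i = 0
  · subst hi0
    by_cases hjN : j = N
    · rw [hjN, ee_1last N 0 c hN]; linarith
    · rw [ee_1b N 0 c hN (j+1) (by omega) (by omega)]
  · by_cases hsup : j = i+1
    · rw [hsup, ee_super N 0 c hN (i+1) (by omega)]
      by_cases hb : i+1 ≤ N-1
      · rw [be_mid N 0 c (i+1) hb]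
        have hA : (2:ℝ) ≤ ((i+1:ℕ):ℝ) := by exact_mod_cast (by omega : 2 ≤ i+1)
        have h5 : (0:ℝ) ≤ 2*((i+1:ℕ):ℝ)^2 - ((i+1:ℕ):ℝ) - 1 := by nlinarith
        nlinarith [mul_nonneg h5 hc.le]
      · rw [be_N N 0 c (i+1) hb]
        have hB : (4:ℝ) ≤ (N:ℝ) := by exact_mod_cast hN
        nlinarith [hc.le]
    · by_cases hjN : j = N
      · rw [hjN]
        by_cases hi1 : i = 1
        · rw [hi1, ee_2last N 0 c hN]; norm_num
        · rw [ee_last N 0 c (i+1) (by omega) (by omega) hN]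
      · rw [ee_far N 0 c hN (i+1) (j+1) (by omega) (by omega) (by omega)]
end Lap
section Rows
variable (N : ℕ) (c : ℝ)

lemma hrow0 (hN : 4 ≤ N) (hc : 0 < c) (i : Fin (N+1)) :
    0 ≤ ∑ j : Fin (N+1), Emat N 0 c i j := by
  set G : ℕ → ℝ := fun jj =>
    if (i:ℕ) ≤ jj then Eentry N 0 c ((i:ℕ)+1) (jj+1)
    else Eentry N 0 c (jj+1) ((i:ℕ)+1) with hG
  have convert1 : ∑ j : Fin (N+1), Emat N 0 c i j = ∑ jj ∈ Finset.range (N+1), G jj := by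
    rw [← Fin.sum_univ_eq_sum_range G (N+1)]
    rfl
  rw [convert1]
  have hNr : (4:ℝ) ≤ (N:ℝ) := by exact_mod_cast hN
  by_cases hi0 : (i:ℕ) = 0
  · have hvan : ∀ jj ∈ Finset.range (N+1), jj ∉ ({0, N} : Finset ℕ) → G jj = 0 := by
      intro jj hjj hnot
      simp only [Finset.mem_insert, Finset.mem_singleton, not_or] at hnot
      simp only [Finset.mem_range] at hjj
      rw [hG]
      simp only [hi0]
      rw [if_pos (by omega)]
      exact ee_1b N 0 c hN (jj+1) (by omega) (by omega)
    rw [← Finset.sum_subset (by intro a ha; simp only [Finset.mem_insert,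
      Finset.mem_singleton] at ha; simp only [Finset.mem_range]; omega) hvan]
    rw [Finset.sum_insert (by simp only [Finset.mem_singleton]; omega), Finset.sum_singleton]
    simp only [hG, hi0]
    rw [if_pos (by omega), if_pos (by omega), ee_11 N 0 c hN, ee_1last N 0 c hN]
    linarith
  · by_cases hi1 : (i:ℕ) = 1
    · have hvan : ∀ jj ∈ Finset.range (N+1), jj ∉ ({1, 2, N} : Finset ℕ) → G jj = 0 := by
        intro jj hjj hnot
        simp only [Finset.mem_insert, Finset.mem_singleton, not_or] at hnot
        simp only [Finset.mem_range] at hjj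
        simp only [hG]; simp only [hi1]
        by_cases ho : 1 ≤ jj
        · rw [if_pos ho]
          exact ee_far N 0 c hN 2 (jj+1) (by omega) (by omega) (by omega)
        · rw [if_neg ho, show jj = 0 from by omega]
          exact ee_1b N 0 c hN 2 (by omega) (by omega)
      rw [← Finset.sum_subset (by intro a ha; simp only [Finset.mem_insert,
        Finset.mem_singleton] at ha; simp only [Finset.mem_range]; omega) hvan]
      rw [Finset.sum_insert (by simp only [Finset.mem_insert, Finset.mem_singleton]; omega),
        Finset.sum_insert (by simp only [Finset.mem_singleton]; omega), Finset.sum_singleton]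
      simp only [hG]; simp only [hi1]
      rw [if_pos (by omega), if_pos (by omega), if_pos (by omega)]
      rw [ee_diag N 0 c hN 2 (by omega), al_2, ee_super N 0 c hN 2 (by omega),
        be_mid N 0 c 2 (by omega), ee_2last N 0 c hN]
      norm_num
      linarith
    · by_cases hiN : (i:ℕ) = N
      · have hvan : ∀ jj ∈ Finset.range (N+1), jj ∉ ({0, N-1, N} : Finset ℕ) → G jj = 0 := by
          intro jj hjj hnot
          simp only [Finset.mem_insert, Finset.mem_singleton, not_or] at hnot
          simp only [Finset.mem_range] at hjj
          simp only [hG]; simp only [hiN]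
          rw [if_neg (by omega)]
          -- 1 ≤ jj ≤ N-2 : Eentry (jj+1) (N+1) = 0 at t = 0
          by_cases h2 : jj = 1
          · rw [h2, ee_2last N 0 c hN]; norm_num
          · rw [ee_last N 0 c (jj+1) (by omega) (by omega) hN]
        rw [← Finset.sum_subset (by intro a ha; simp only [Finset.mem_insert,
          Finset.mem_singleton] at ha; simp only [Finset.mem_range]; omega) hvan]
        rw [Finset.sum_insert (by simp only [Finset.mem_insert, Finset.mem_singleton]; omega),
          Finset.sum_insert (by simp only [Finset.mem_singleton]; omega), Finset.sum_singleton]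
        simp only [hG]; simp only [hiN]
        rw [if_neg (by omega), if_neg (by omega), if_pos (by omega)]
        rw [show (0:ℕ)+1 = 1 from rfl, ee_1last N 0 c hN,
          show N-1+1 = N from by omega, ee_super N 0 c hN N (by omega),
          be_N N 0 c N (by omega), ee_diag N 0 c hN (N+1) (by omega), al_last N 0 c hN]
        nlinarith
      · by_cases hiN1 : (i:ℕ) = N-1
        · have hvan : ∀ jj ∈ Finset.range (N+1), jj ∉ ({N-2, N-1, N} : Finset ℕ) → G jj = 0 := by
            intro jj hjj hnot
            simp only [Finset.mem_insert, Finset.mem_singleton, not_or] at hnot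
            simp only [Finset.mem_range] at hjj
            simp only [hG]; simp only [hiN1]
            rw [if_neg (by omega)]
            -- jj ≤ N-3 : Eentry (jj+1) N = 0
            by_cases h0 : jj = 0
            · rw [h0, ee_1b N 0 c hN (N-1+1) (by omega) (by omega)]
            · exact ee_far N 0 c hN (jj+1) (N-1+1) (by omega) (by omega) (by omega)
          rw [← Finset.sum_subset (by intro a ha; simp only [Finset.mem_insert,
            Finset.mem_singleton] at ha; simp only [Finset.mem_range]; omega) hvan]
          rw [Finset.sum_insert (by simp only [Finset.mem_insert, Finset.mem_singleton]; omega),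
            Finset.sum_insert (by simp only [Finset.mem_singleton]; omega), Finset.sum_singleton]
          simp only [hG]; simp only [hiN1]
          rw [if_neg (by omega), if_pos (by omega), if_pos (by omega)]
          have e1 : Eentry N 0 c (N-2+1) (N-1+1)
              = 2*((N-1:ℕ):ℝ)*0 - (2*((N-1:ℕ):ℝ)^2 - ((N-1:ℕ):ℝ) - 1)*c := by
            rw [show N-2+1 = N-1 from by omega, ee_super N 0 c hN (N-1) (by omega),
              be_mid N 0 c (N-1) (by omega)]
          have e2 : Eentry N 0 c (N-1+1) (N-1+1) = 2*(N:ℝ)*((N:ℝ)-1)*c - (2*(N:ℝ)+1)*0 := by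
            rw [show N-1+1 = N from by omega, ee_diag N 0 c hN N (by omega), al_N N 0 c hN]
          have e3 : Eentry N 0 c (N-1+1) (N+1) = 3*0 - 2*((N:ℝ)-1)*c := by
            rw [show N-1+1 = N from by omega, ee_super N 0 c hN N (by omega),
              be_N N 0 c N (by omega)]
          rw [e1, e2, e3, cast_pred N (by omega)]
          nlinarith
        · -- middle rows : 2 ≤ i ≤ N-2
          have h2i : 2 ≤ (i:ℕ) := by omega
          have hiN2 : (i:ℕ) ≤ N-2 := by omega
          set p := (i:ℕ) with hp
          have hvan : ∀ jj ∈ Finset.range (N+1), jj ∉ ({p-1, p, p+1, N} : Finset ℕ) → G jj = 0 := by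
            intro jj hjj hnot
            simp only [Finset.mem_insert, Finset.mem_singleton, not_or] at hnot
            simp only [Finset.mem_range] at hjj
            simp only [hG]
            by_cases ho : p ≤ jj
            · rw [if_pos ho]
              exact ee_far N 0 c hN (p+1) (jj+1) (by omega) (by omega) (by omega)
            · rw [if_neg ho]
              by_cases h0 : jj = 0
              · rw [h0, ee_1b N 0 c hN (p+1) (by omega) (by omega)]
              · exact ee_far N 0 c hN (jj+1) (p+1) (by omega) (by omega) (by omega)
          rw [← Finset.sum_subset (by intro a ha; simp only [Finset.mem_insert,
            Finset.mem_singleton] at ha; simp only [Finset.mem_range]; omega) hvan]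
          rw [Finset.sum_insert (by simp only [Finset.mem_insert, Finset.mem_singleton]; omega),
            Finset.sum_insert (by simp only [Finset.mem_insert, Finset.mem_singleton]; omega),
            Finset.sum_insert (by simp only [Finset.mem_singleton]; omega),
            Finset.sum_singleton]
          simp only [hG]
          rw [if_neg (by omega), if_pos (by omega), if_pos (by omega), if_pos (by omega)]
          rw [show p-1+1 = p from by omega,
            ee_super N 0 c hN p (by omega), be_mid N 0 c p (by omega),
            ee_diag N 0 c hN (p+1) (by omega), al_mid N 0 c hN (p+1) (by omega) (by omega),
            ee_super N 0 c hN (p+1) (by omega), be_mid N 0 c (p+1) (by omega),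
            ee_last N 0 c (p+1) (by omega) (by omega) hN]
          have hpr : (2:ℝ) ≤ (p:ℝ) := by exact_mod_cast h2i
          push_cast
          nlinarith
end Rows
section Final
variable (N : ℕ) (c : ℝ)

lemma entry_affine (hc : c ≠ 0) (t : ℝ) (a b : ℕ) :
    Eentry N t c a b = (1 - t/c) * Eentry N 0 c a b + (t/c) * Eentry N c c a b := by
  unfold Eentry Ealpha Ebeta
  split_ifs <;> field_simp <;> ring

lemma emat_convex (hc : c ≠ 0) (t : ℝ) :
    Emat N t c = (1 - t/c) • Emat N 0 c + (t/c) • Emat N c c := by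
  ext i j
  simp only [Matrix.add_apply, Matrix.smul_apply, smul_eq_mul, Emat]
  by_cases h : (i:ℕ) ≤ (j:ℕ)
  · rw [if_pos h, if_pos h, if_pos h]
    exact entry_affine N c hc t _ _
  · rw [if_neg h, if_neg h, if_neg h]
    exact entry_affine N c hc t _ _

lemma emat_cc (hN : 4 ≤ N) : Emat N c c = (Dmat N)ᵀ * Zmat N c * Dmat N := by
  ext i j
  rw [DZD]
  unfold Emat
  by_cases h : (i:ℕ) ≤ (j:ℕ)
  · rw [if_pos h]
    exact main1 N c hN h (by omega)
  · rw [if_neg h, Fn_symm]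
    exact main1 N c hN (by omega) (by omega)

end Final

theorem stmt1 (N : ℕ) (hN : 4 ≤ N) (c t : ℝ) (hc : 0 < c) (ht : t ∈ Set.Icc (0 : ℝ) c) :
    (Emat N t c).PosSemidef := by
  obtain ⟨ht0, htc⟩ := ht
  rw [Matrix.posSemidef_iff_dotProduct_mulVec]
  constructor
  · ext i j
    simp only [Matrix.conjTranspose_apply, star_trivial]
    exact emat_symm N c t j i
  · intro x
    have hsx : star x = x := by
      funext k; simp
    rw [hsx]
    rw [emat_convex N c (ne_of_gt hc) t, Matrix.add_mulVec, Matrix.smul_mulVec,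
      Matrix.smul_mulVec, dotProduct_add, dotProduct_smul, dotProduct_smul,
      smul_eq_mul, smul_eq_mul]
    have q0 : 0 ≤ x ⬝ᵥ (Emat N 0 c *ᵥ x) := by
      apply lap_nonneg _ (emat_symm N c 0) _ (hrow0 N c hN hc)
      intro i j hij
      unfold Emat
      by_cases h : (i:ℕ) ≤ (j:ℕ)
      · rw [if_pos h]
        have : (i:ℕ) < (j:ℕ) := lt_of_le_of_ne h (fun he => hij (Fin.ext he))
        exact hoff0 N c hN hc _ _ this (by omega)
      · rw [if_neg h]
        exact hoff0 N c hN hc _ _ (by omega) (by omega)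
    have q1 : 0 ≤ x ⬝ᵥ (Emat N c c *ᵥ x) := by
      rw [emat_cc N c hN, ← Matrix.mulVec_mulVec, ← Matrix.mulVec_mulVec,
        Matrix.dotProduct_mulVec, Matrix.vecMul_transpose]
      exact Zquad N c hN hc (Dmat N *ᵥ x)
    have hco1 : 0 ≤ 1 - t/c := by
      have : t/c ≤ 1 := by
        rw [div_le_one hc]; exact htc
      linarith
    have hco2 : 0 ≤ t/c := div_nonneg ht0 hc.le
    exact add_nonneg (mul_nonneg hco1 q0) (mul_nonneg hco2 q1)
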